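/- Suppose p of the additional jump points lie in the open interval I_α and q of them lie in the open interval I_β (and these account for all added points in I_α and I_β). If σ : ℝ → ℝ is a bijection such that 𝒜_S is invariant under σ and σ(I_α) = I_β, then p = q. -/
import Mathlib


open scoped Classical

noncomputable section

namespace PaperTRS

/-- The algebra of complex valued functions constant on each set of the family `P`. -/
def partAlg {X J : Type*} (P : J → Set X) : Subalgebra ℂ (X → ℂ) where
  carrier := {h | ∀ i, ∀ x ∈ P i, ∀ y ∈ P i, h x = h y}
  mul_mem' := by
    intro a b ha hb i x hx y hy
    simp only [Pi.mul_apply, ha i x hx y hy, hb i x hx y hy]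
  add_mem' := by
    intro a b ha hb i x hx y hy
    simp only [Pi.add_apply, ha i x hx y hy, hb i x hx y hy]
  algebraMap_mem' := by intro r i x hx y hy; rfl

/-- Piecewise constant functions on `ℝ` whose jumps all lie in the set `T`. -/
def pcAlgOn (T : Set ℝ) : Subalgebra ℂ (ℝ → ℂ) where
  carrier := {h | ∀ x y : ℝ, x ∉ T → y ∉ T →
    (∀ u ∈ T, u ∉ Set.Icc (min x y) (max x y)) → h x = h y}
  mul_mem' := by
    intro a b ha hb x y hx hy hxy
    simp only [Pi.mul_apply, ha x y hx hy hxy, hb x y hx hy hxy]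
  add_mem' := by
    intro a b ha hb x y hx hy hxy
    simp only [Pi.add_apply, ha x y hx hy hxy, hb x y hx hy hxy]
  algebraMap_mem' := by intro r x y _ _ _; rfl

/-- Invariance of an algebra of functions under a self-map of `X`. -/
def AlgInvariant {X : Type*} (A : Subalgebra ℂ (X → ℂ)) (σ : X → X) : Prop :=
  ∀ h ∈ A, (h ∘ σ) ∈ A

/-- `Sep A σ n = {x | ∃ h ∈ A, h x ≠ σ̃ⁿ(h) x}`, where `σ̃ⁿ(h) = h ∘ σ⁻ⁿ`. -/
def Sep {X : Type*} (A : Subalgebra ℂ (X → ℂ)) (σ : Equiv.Perm X) (n : ℤ) : Set X :=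
  {x | ∃ h ∈ A, h x ≠ h ((σ ^ n)⁻¹ x)}

/-- Twisted convolution product on the crossed product `⋊ ℤ`:
`(fₙ δⁿ) * (gₘ δᵐ) = fₙ · σ̃ⁿ(gₘ) · δ^{n+m}` extended bilinearly. -/
def cmul {X : Type*} (σ : Equiv.Perm X) (f g : ℤ →₀ (X → ℂ)) : ℤ →₀ (X → ℂ) :=
  f.sum fun n a => g.sum fun m b =>
    Finsupp.single (n + m) (fun x => a x * b ((σ ^ n)⁻¹ x))

/-- Membership of an element `Σ fₙ δⁿ` in the crossed product of the algebra `B` with `ℤ`. -/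
def InCrossed {X : Type*} (B : Subalgebra ℂ (X → ℂ)) (f : ℤ →₀ (X → ℂ)) : Prop :=
  ∀ n, f n ∈ B

/-- The commutant of `A` inside the crossed product `B ⋊ ℤ` (where `A ⊆ B`). -/
def commutant {X : Type*} (A B : Subalgebra ℂ (X → ℂ)) (σ : Equiv.Perm X) :
    Set (ℤ →₀ (X → ℂ)) :=
  {f | InCrossed B f ∧
    ∀ a ∈ A, cmul σ f (Finsupp.single 0 a) = cmul σ (Finsupp.single 0 a) f}

/-- The jump points `t₁ < ⋯ < t_N` extended by `t₀ = -∞` and `t_{N+1} = +∞`. -/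
def tE (N : ℕ) (t : Fin N → ℝ) (i : ℕ) : EReal :=
  if h : 1 ≤ i ∧ i ≤ N then ((t ⟨i - 1, by omega⟩ : ℝ) : EReal)
  else if i = 0 then ⊥ else ⊤

/-- The open interval `I_i = (t_i, t_{i+1})` for `0 ≤ i ≤ N`. -/
def openPiece (N : ℕ) (t : Fin N → ℝ) (i : ℕ) : Set ℝ :=
  {x : ℝ | tE N t i < (x : EReal) ∧ (x : EReal) < tE N t (i + 1)}

/-- The sets of the partition of `ℝ` determined by the jump points: the open
intervals `I_0, …, I_N` together with the singletons `{t_i}`. -/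
def pieces (N : ℕ) (t : Fin N → ℝ) : Set (Set ℝ) :=
  {P | (∃ i : ℕ, i ≤ N ∧ P = openPiece N t i) ∨ (∃ i : Fin N, P = {t i})}

/-- `C_k`: points `x` such that `k` is the smallest positive integer with `x` and
`σᵏ(x)` in one common set of the partition. -/
def Ck (N : ℕ) (t : Fin N → ℝ) (σ : Equiv.Perm ℝ) (k : ℕ) : Set ℝ :=
  {x | IsLeast {j : ℕ | 0 < j ∧ ∃ P ∈ pieces N t, x ∈ P ∧ (σ ^ j) x ∈ P} k}

end PaperTRS
namespace PaperTRS

/-- With `p` points `s i 0 < ⋯ < s i (p-1)` added in the interval `I_{α i}`, the `j`-th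
open subinterval of the refined partition of `I_{α i}`, for `j = 0, …, p`. -/
def subPiece (N : ℕ) (t : Fin N → ℝ) {k p : ℕ} (α : Fin k → ℕ)
    (s : Fin k → Fin p → ℝ) (i : Fin k) (j : Fin (p + 1)) : Set ℝ :=
  {x : ℝ |
    (if hj : (j : ℕ) = 0 then tE N t (α i)
      else ((s i ⟨(j : ℕ) - 1, by have := j.isLt; omega⟩ : ℝ) : EReal)) < (x : EReal) ∧
    (x : EReal) <
      (if hj : (j : ℕ) = p then tE N t (α i + 1)
        else ((s i ⟨(j : ℕ), by have := j.isLt; omega⟩ : ℝ) : EReal))}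

/-- The sets of the refined partition of the union of the intervals `I_{α i}`: the open
subintervals determined by the added jump points together with the singleton jump points. -/
def cyclePieces (N : ℕ) (t : Fin N → ℝ) {k p : ℕ} (α : Fin k → ℕ)
    (s : Fin k → Fin p → ℝ) : Set (Set ℝ) :=
  {P | (∃ i j, P = subPiece N t α s i j) ∨ (∃ i j, P = ({s i j} : Set ℝ))}

/-- `C̃_r`: points `x` of `⋃ᵢ I_{α i}` such that `r` is the smallest positive integer with
`x` and `σʳ(x)` in one common set of the refined partition. -/
def Ctil (N : ℕ) (t : Fin N → ℝ) (σ : Equiv.Perm ℝ) {k p : ℕ} (α : Fin k → ℕ)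
    (s : Fin k → Fin p → ℝ) (r : ℕ) : Set ℝ :=
  {x | x ∈ ⋃ i, openPiece N t (α i) ∧
    IsLeast {j : ℕ | 0 < j ∧ ∃ P ∈ cyclePieces N t α s, x ∈ P ∧ (σ ^ j) x ∈ P} r}

/-- The cyclic setup: `k` pairwise distinct open intervals `I_{α 0}, …, I_{α (k-1)}` of the
original partition, contained in `C_k` and permuted cyclically by `σ`, with `p` jump points
`s i 0 < ⋯ < s i (p-1)` added into each of them, and both the original algebra `𝒜` and the
refined algebra `𝒜_S` invariant under `σ` and `σ⁻¹`. -/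
def CyclicSetup (N : ℕ) (t : Fin N → ℝ) (σ : Equiv.Perm ℝ) {k p : ℕ} (α : Fin k → ℕ)
    (s : Fin k → Fin p → ℝ) : Prop :=
  0 < k ∧ (∀ i, α i ≤ N) ∧ Function.Injective α ∧
  (∀ i j, s i j ∈ openPiece N t (α i)) ∧ (∀ i, StrictMono (s i)) ∧
  (∀ i : Fin k, ∃ i' : Fin k, ((i' : ℕ) = ((i : ℕ) + 1) % k) ∧
    σ '' openPiece N t (α i) = openPiece N t (α i')) ∧
  (∀ i, openPiece N t (α i) ⊆ Ck N t σ k) ∧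
  AlgInvariant (pcAlgOn (Set.range t)) σ ∧
  AlgInvariant (pcAlgOn (Set.range t)) σ.symm ∧
  AlgInvariant (pcAlgOn (Set.range t ∪ ⋃ i, Set.range (s i))) σ ∧
  AlgInvariant (pcAlgOn (Set.range t ∪ ⋃ i, Set.range (s i))) σ.symm

/-- `C_k` for the partition `P` of a general set `X`. -/
def CkGen {X ι : Type*} (P : ι → Set X) (σ : Equiv.Perm X) (k : ℕ) : Set X :=
  {x | IsLeast {j : ℕ | 0 < j ∧ ∃ i, x ∈ P i ∧ (σ ^ j) x ∈ P i} k}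

/-- `C̃_r` relative to a family `Q` of refined pieces inside the subset `base` of `X`. -/
def CtilGen {X ι : Type*} (σ : Equiv.Perm X) (Q : ι → Set X) (base : Set X) (r : ℕ) :
    Set X :=
  {x | x ∈ base ∧ IsLeast {j : ℕ | 0 < j ∧ ∃ i, x ∈ Q i ∧ (σ ^ j) x ∈ Q i} r}

/-- `C_∞`: points that never return to the partition set they lie in. -/
def Cinf {X ι : Type*} (P : ι → Set X) (σ : Equiv.Perm X) : Set X :=
  {x | ∀ k : ℕ, 0 < k → ¬∃ i, x ∈ P i ∧ (σ ^ k) x ∈ P i}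

end PaperTRS
namespace PaperTRS


lemma indicator_singleton_mem (T : Set ℝ) {τ : ℝ} (hτ : τ ∈ T) :
    (fun x : ℝ => if x = τ then (1:ℂ) else 0) ∈ pcAlgOn T := by
  intro x y hx hy _
  simp [show x ≠ τ from fun h => hx (h ▸ hτ), show y ≠ τ from fun h => hy (h ▸ hτ)]

lemma mem_of_indicator_singleton_mem {T : Set ℝ} (hT : T.Finite) {w : ℝ}
    (h : (fun x : ℝ => if x = w then (1:ℂ) else 0) ∈ pcAlgOn T) : w ∈ T := by
  by_contra hw
  obtain ⟨ε, hε, hball⟩ := Metric.isOpen_iff.1 hT.isClosed.isOpen_compl w hw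
  set y := w + ε/2 with hy0
  have hwy : w < y := by simp [hy0]; linarith
  have hsub : Set.Icc w y ⊆ Metric.ball w ε := by
    intro u hu
    have h1 : w ≤ u := hu.1
    have h2 : u ≤ w + ε/2 := hy0 ▸ hu.2
    simp only [Metric.mem_ball, Real.dist_eq, abs_lt]
    constructor <;> linarith
  have hy : y ∉ T := fun hyT => hball (hsub ⟨le_of_lt hwy, le_refl y⟩) hyT
  have := h w y hw hy (by
    intro u hu hmem
    rw [min_eq_left hwy.le, max_eq_right hwy.le] at hmem
    exact hball (hsub hmem) hu)
  simp [hwy.ne'] at this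

lemma t_not_mem_openPiece {N : ℕ} {t : Fin N → ℝ} (ht : StrictMono t)
    {b : ℕ} (hb : b ≤ N) (j : Fin N) : t j ∉ openPiece N t b := by
  rintro ⟨h1, h2⟩
  have hjN := j.isLt
  by_cases hbN : b + 1 ≤ N
  · have hbe : tE N t (b+1) = ((t ⟨b, by omega⟩ : ℝ) : EReal) := by
      simp [tE, show 1 ≤ b + 1 ∧ b + 1 ≤ N from ⟨by omega, hbN⟩]
    rw [hbe, EReal.coe_lt_coe_iff] at h2
    have hjb : (j : ℕ) < b := by
      by_contra hc
      exact absurd (ht.le_iff_le.2 (by simp [Fin.le_def]; omega)) (not_le.2 h2)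
    rcases Nat.eq_zero_or_pos b with hb0 | hb1
    · omega
    · have hbel : tE N t b = ((t ⟨b - 1, by omega⟩ : ℝ) : EReal) := by
        simp [tE, show 1 ≤ b ∧ b ≤ N from ⟨hb1, hb⟩]
      rw [hbel, EReal.coe_lt_coe_iff] at h1
      have : b - 1 < (j : ℕ) := by
        by_contra hc
        exact absurd (ht.le_iff_le.2 (by simp [Fin.le_def]; omega)) (not_le.2 h1)
      omega
  · have hbN' : b = N := by omega
    have hb1 : 1 ≤ b := by omega
    have hbel : tE N t b = ((t ⟨b - 1, by omega⟩ : ℝ) : EReal) := by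
      simp [tE, show 1 ≤ b ∧ b ≤ N from ⟨hb1, hb⟩]
    rw [hbel, EReal.coe_lt_coe_iff] at h1
    have : b - 1 < (j : ℕ) := by
      by_contra hc
      exact absurd (ht.le_iff_le.2 (by simp [Fin.le_def]; omega)) (not_le.2 h1)
    omega

/-- if `𝒜_S` is invariant under a bijection `σ` with `σ(I_α) = I_β`, then the
number of added jump points lying in `I_α` equals the number of added jump points lying
in `I_β`. -/
theorem statement7 (N : ℕ) (t : Fin N → ℝ) (ht : StrictMono t)
    (m : ℕ) (s : Fin m → ℝ) (hs : Function.Injective s)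
    (hst : ∀ i, s i ∉ Set.range t)
    (σ : Equiv.Perm ℝ)
    (hAS : AlgInvariant (pcAlgOn (Set.range t ∪ Set.range s)) σ)
    (a b : ℕ) (ha : a ≤ N) (hb : b ≤ N)
    (hmap : σ '' openPiece N t a = openPiece N t b) :
    ({i : Fin m | s i ∈ openPiece N t a} : Set (Fin m)).ncard =
      ({i : Fin m | s i ∈ openPiece N t b} : Set (Fin m)).ncard := by
  set T := Set.range t ∪ Set.range s with hTdef
  have hTfin : T.Finite := (Set.finite_range t).union (Set.finite_range s)
  have hsymm : ∀ τ ∈ T, σ.symm τ ∈ T := by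
    intro τ hτ
    have h1 := hAS _ (indicator_singleton_mem T hτ)
    have h2 : ((fun x : ℝ => if x = τ then (1:ℂ) else 0) ∘ σ) =
        (fun x : ℝ => if x = σ.symm τ then (1:ℂ) else 0) := by
      funext x
      simp only [Function.comp_apply, Equiv.apply_eq_iff_eq_symm_apply]
    rw [h2] at h1
    exact mem_of_indicator_singleton_mem hTfin h1
  have hsub : σ.symm '' T ⊆ T := by
    rintro x ⟨τ, hτ, rfl⟩; exact hsymm τ hτ
  have himg : σ.symm '' T = T :=
    Set.eq_of_subset_of_ncard_le hsub
      (le_of_eq (Set.ncard_image_of_injective T σ.symm.injective).symm) hTfin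
  have hsymmPiece : σ.symm '' openPiece N t b = openPiece N t a := by
    rw [← hmap]
    exact Equiv.symm_image_image σ _
  have key : ∀ c : ℕ, c ≤ N → T ∩ openPiece N t c
      = s '' {i | s i ∈ openPiece N t c} := by
    intro c hc
    ext x
    constructor
    · rintro ⟨hxT, hxc⟩
      rcases hxT with ⟨j, rfl⟩ | ⟨i, rfl⟩
      · exact absurd hxc (t_not_mem_openPiece ht hc j)
      · exact ⟨i, hxc, rfl⟩
    · rintro ⟨i, hi, rfl⟩; exact ⟨Or.inr ⟨i, rfl⟩, hi⟩
  have himgInter : σ.symm '' (T ∩ openPiece N t b) = T ∩ openPiece N t a := by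
    rw [Set.image_inter σ.symm.injective, himg, hsymmPiece]
  calc ({i : Fin m | s i ∈ openPiece N t a} : Set (Fin m)).ncard
      = (s '' {i | s i ∈ openPiece N t a}).ncard :=
        (Set.ncard_image_of_injective _ hs).symm
    _ = (T ∩ openPiece N t a).ncard := by rw [key a ha]
    _ = (σ.symm '' (T ∩ openPiece N t b)).ncard := by rw [himgInter]
    _ = (T ∩ openPiece N t b).ncard :=
        Set.ncard_image_of_injective _ σ.symm.injective
    _ = (s '' {i | s i ∈ openPiece N t b}).ncard := by rw [key b hb]
    _ = ({i : Fin m | s i ∈ openPiece N t b} : Set (Fin m)).ncard :=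
        Set.ncard_image_of_injective _ hs


end PaperTRS
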